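/- If K is finite-dimensional and T is a closed densely-defined operator from H to K, then the operator Ṫ := (I + T*T)^{-1/2} T* is a bounded operator from K to H with ‖Ṫ‖ < 1, i.e. it belongs to the open unit ball of L(K,H). -/

import Mathlib

open scoped InnerProductSpace

private theorem adj_dom_top {H K : Type*} [NormedAddCommGroup H] [InnerProductSpace ℂ H] [CompleteSpace H]
    [NormedAddCommGroup K] [InnerProductSpace ℂ K] [CompleteSpace K]
    [FiniteDimensional ℂ K]
    (T : H →ₗ.[ℂ] K) (hdense : Dense (T.domain : Set H)) (hclosed : T.IsClosed) :
    T.adjoint.domain = ⊤ := by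
  set E2 := WithLp 2 (H × K)
  let e : E2 ≃ₗ[ℂ] H × K := WithLp.linearEquiv 2 ℂ (H × K)
  let G : Submodule ℂ E2 := T.graph.comap e.toLinearMap
  have hGclosed : IsClosed (G : Set E2) := hclosed.preimage (WithLp.prod_continuous_ofLp 2 H K)
  have hclos : Gᗮᗮ = G := by
    rw [Submodule.orthogonal_orthogonal_eq_closure]
    exact hGclosed.submodule_topologicalClosure_eq
  have horth : (T.adjoint.domain)ᗮ = ⊥ := by
    rw [Submodule.eq_bot_iff]
    intro u hu
    rw [Submodule.mem_orthogonal] at hu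
    have hmem : (WithLp.equiv 2 (H × K)).symm (0, u) ∈ Gᗮᗮ := by
      rw [Submodule.mem_orthogonal]
      intro w hw
      rw [Submodule.mem_orthogonal] at hw
      have hdom : -(e w).2 ∈ T.adjoint.domain := by
        apply LinearPMap.mem_adjoint_domain_of_exists
        refine ⟨(e w).1, fun x => ?_⟩
        have hx : (WithLp.equiv 2 (H × K)).symm ((x : H), T x) ∈ G := T.mem_graph x
        have h0 := hw _ hx
        rw [WithLp.prod_inner_apply] at h0
        have h2 : (inner ℂ ((x : H)) (e w).1 : ℂ) = - inner ℂ (T x) (e w).2 := by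
          rw [eq_neg_iff_add_eq_zero]; exact h0
        calc (inner ℂ (e w).1 ((x : H)) : ℂ)
            = starRingEnd ℂ (inner ℂ ((x:H)) (e w).1 : ℂ) := (inner_conj_symm _ _).symm
          _ = starRingEnd ℂ (inner ℂ (T x) (-(e w).2) : ℂ) := by rw [h2, inner_neg_right]
          _ = inner ℂ (-(e w).2) (T x) := inner_conj_symm _ _
      have h4 : (inner ℂ (e w).2 u : ℂ) = 0 := by
        have h5 := hu (-(e w).2) hdom
        rwa [inner_neg_left, neg_eq_zero] at h5
      rw [WithLp.prod_inner_apply]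
      have h4' : (inner ℂ w.snd u : ℂ) = 0 := h4; simpa using h4'
    rw [hclos] at hmem
    obtain ⟨x, hx1, hx2⟩ := T.mem_graph_iff.mp hmem
    have hx0 : x = 0 := by ext; exact hx1
    rw [hx0] at hx2
    have hx3 : u = T 0 := hx2.symm; simpa using hx3
  have hclosed' : IsClosed (T.adjoint.domain : Set K) :=
    Submodule.closed_of_finiteDimensional _
  rw [← hclosed'.submodule_topologicalClosure_eq, Submodule.topologicalClosure_eq_top_iff]
  exact horth

private theorem key_est {H K : Type*} [NormedAddCommGroup H] [InnerProductSpace ℂ H] [CompleteSpace H]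
    [NormedAddCommGroup K] [InnerProductSpace ℂ K] [CompleteSpace K]
    [FiniteDimensional ℂ K]
    (T : H →ₗ.[ℂ] K) (hdense : Dense (T.domain : Set H))
    (B R : H →L[ℂ] H)
    (hBinv₁ : ∀ p : {p : T.domain // T p ∈ T.adjoint.domain},
      B ((p.1 : H) + T.adjoint ⟨T p.1, p.2⟩) = (p.1 : H))
    (hBinv₂ : ∀ y : H, ∃ p : {p : T.domain // T p ∈ T.adjoint.domain},
      (p.1 : H) + T.adjoint ⟨T p.1, p.2⟩ = y)
    (hR : R.IsPositive) (hRsq : R * R = B)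
    (y : K) (hy : y ∈ T.adjoint.domain) (hy0 : y ≠ 0) :
    ‖R (T.adjoint ⟨y, hy⟩)‖ < ‖y‖ := by
  set v : H := T.adjoint ⟨y, hy⟩ with hv
  obtain ⟨p, hp⟩ := hBinv₂ v
  have hBv : B v = (p.1 : H) := by rw [← hp]; exact hBinv₁ p
  set s := ‖R v‖ with hs
  have hRsym : (R : H →ₗ[ℂ] H).IsSymmetric :=
    ContinuousLinearMap.isSelfAdjoint_iff_isSymmetric.mp hR.isSelfAdjoint
  have h1 : ⟪R v, R v⟫_ℂ = ⟪v, (R * R) v⟫_ℂ := by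
    rw [ContinuousLinearMap.mul_apply]; exact hRsym v (R v)
  have h1' : ⟪R v, R v⟫_ℂ = ⟪v, ((p.1 : H))⟫_ℂ := by rw [h1, hRsq, hBv]
  have h2 : ⟪v, ((p.1:H))⟫_ℂ = ⟪((p.1:H)), ((p.1:H))⟫_ℂ + ⟪T.adjoint ⟨T p.1, p.2⟩, ((p.1:H))⟫_ℂ := by
    rw [← inner_add_left, hp]
  have h3 : ⟪T.adjoint ⟨T p.1, p.2⟩, ((p.1:H))⟫_ℂ = ⟪T p.1, T p.1⟫_ℂ :=
    T.adjoint_isFormalAdjoint hdense ⟨T p.1, p.2⟩ p.1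
  have h4 : ⟪v, ((p.1:H))⟫_ℂ = ⟪y, T p.1⟫_ℂ :=
    T.adjoint_isFormalAdjoint hdense ⟨y, hy⟩ p.1
  have k1 : s^2 = ‖(p.1:H)‖^2 + ‖T p.1‖^2 := by
    calc s^2 = RCLike.re ⟪R v, R v⟫_ℂ := (inner_self_eq_norm_sq _).symm
      _ = RCLike.re (⟪((p.1:H)), ((p.1:H))⟫_ℂ + ⟪T p.1, T p.1⟫_ℂ) := by rw [h1', h2, h3]
      _ = ‖(p.1:H)‖^2 + ‖T p.1‖^2 := by
          rw [map_add, inner_self_eq_norm_sq, inner_self_eq_norm_sq]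
  have k2 : s^2 = RCLike.re ⟪y, T p.1⟫_ℂ := by
    rw [← inner_self_eq_norm_sq (𝕜 := ℂ) (R v), h1', h4]
  have hbound : s^2 ≤ ‖y‖ * ‖T p.1‖ := by
    rw [k2]; exact re_inner_le_norm _ _
  by_cases hs0 : s = 0
  · rw [hs0]; exact norm_pos_iff.mpr hy0
  · have hspos : 0 < s := lt_of_le_of_ne (norm_nonneg _) (Ne.symm hs0)
    by_cases hp0 : (p.1 : H) = 0
    · exfalso
      have hq : p.1 = 0 := by ext; exact hp0
      have hT0 : T p.1 = (0 : K) := by rw [hq]; simp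
      rw [hT0, norm_zero, hp0, norm_zero] at k1
      nlinarith
    · have hppos : 0 < ‖(p.1 : H)‖ := norm_pos_iff.mpr hp0
      have hTlt : ‖T p.1‖ < s := by nlinarith
      have hlt : s * s < ‖y‖ * s := by
        calc s * s = s^2 := (sq s).symm
          _ ≤ ‖y‖ * ‖T p.1‖ := hbound
          _ < ‖y‖ * s := mul_lt_mul_of_pos_left hTlt (norm_pos_iff.mpr hy0)
      exact lt_of_mul_lt_mul_right hlt (le_of_lt hspos)

private theorem norm_lt_one_of_forall {K H : Type*} [NormedAddCommGroup K] [NormedAddCommGroup H]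
    [NormedSpace ℂ K] [NormedSpace ℂ H] [FiniteDimensional ℂ K]
    (A : K →L[ℂ] H) (h : ∀ y : K, y ≠ 0 → ‖A y‖ < ‖y‖) : ‖A‖ < 1 := by
  rcases subsingleton_or_nontrivial K with hK | hK
  · have : A = 0 := by ext y; rw [Subsingleton.elim y 0]; simp
    rw [this]; simp
  · obtain ⟨y₀, hy₀mem, hmax⟩ :=
      (isCompact_sphere (0 : K) 1).exists_isMaxOn
        (NormedSpace.sphere_nonempty.mpr zero_le_one)
        (continuous_norm.comp A.continuous).continuousOn
    have hy₀norm : ‖y₀‖ = 1 := by simpa using (mem_sphere_zero_iff_norm.mp hy₀mem)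
    have hy₀ne : y₀ ≠ 0 := by intro h0; rw [h0, norm_zero] at hy₀norm; norm_num at hy₀norm
    have hc : ‖A y₀‖ < 1 := by rw [← hy₀norm]; exact h y₀ hy₀ne
    have hAle : ‖A‖ ≤ ‖A y₀‖ := by
      apply A.opNorm_le_bound (norm_nonneg _)
      intro y
      by_cases hy : y = 0
      · simp [hy]
      · have hyn : 0 < ‖y‖ := norm_pos_iff.mpr hy
        have hu : (((‖y‖ : ℂ))⁻¹ • y) ∈ Metric.sphere (0 : K) 1 := by
          rw [mem_sphere_zero_iff_norm, norm_smul, norm_inv, Complex.norm_real, norm_norm]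
          field_simp
        have := hmax hu
        simp only [Set.mem_setOf_eq, Function.comp_apply] at this
        rw [map_smul, norm_smul, norm_inv, Complex.norm_real, norm_norm] at this
        calc ‖A y‖ = ‖y‖ * (‖y‖⁻¹ * ‖A y‖) := by field_simp
          _ ≤ ‖y‖ * ‖A y₀‖ := by
              apply mul_le_mul_of_nonneg_left _ (norm_nonneg y)
              exact this
          _ = ‖A y₀‖ * ‖y‖ := mul_comm _ _
    exact lt_of_le_of_lt hAle hc


/-- Let `K` be finite dimensional and `T : H → K` closed and densely
defined. With `B = (I + T*T)^{-1}` and `R = (I + T*T)^{-1/2}` its positive square root,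
the operator `Ṫ = (I + T*T)^{-1/2} T*` is (everywhere defined and) a bounded operator
`A : K → H` with `‖A‖ < 1`, i.e. it belongs to the open unit ball of `L(K,H)`. -/
theorem hat_mem_open_unit_ball_of_finiteDimensional
    {H K : Type*} [NormedAddCommGroup H] [InnerProductSpace ℂ H] [CompleteSpace H]
    [NormedAddCommGroup K] [InnerProductSpace ℂ K] [CompleteSpace K]
    [FiniteDimensional ℂ K]
    (T : H →ₗ.[ℂ] K) (hdense : Dense (T.domain : Set H)) (hclosed : T.IsClosed)
    (B R : H →L[ℂ] H) (hB : B.IsPositive)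
    (hBinv₁ : ∀ p : {p : T.domain // T p ∈ T.adjoint.domain},
      B ((p.1 : H) + T.adjoint ⟨T p.1, p.2⟩) = (p.1 : H))
    (hBinv₂ : ∀ y : H, ∃ p : {p : T.domain // T p ∈ T.adjoint.domain},
      (p.1 : H) + T.adjoint ⟨T p.1, p.2⟩ = y)
    (hR : R.IsPositive) (hRsq : R * R = B) :
    T.adjoint.domain = ⊤ ∧
    ∃ A : K →L[ℂ] H, ‖A‖ < 1 ∧
      ∀ y : K, ∀ hy : y ∈ T.adjoint.domain, A y = R (T.adjoint ⟨y, hy⟩) := by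
  have htop : T.adjoint.domain = ⊤ := adj_dom_top T hdense hclosed
  refine ⟨htop, ?_⟩
  have hmem : ∀ y : K, y ∈ T.adjoint.domain := fun y => htop ▸ Submodule.mem_top
  let ι : K →ₗ[ℂ] T.adjoint.domain :=
    { toFun := fun y => ⟨y, hmem y⟩
      map_add' := fun a b => rfl
      map_smul' := fun c a => rfl }
  let A₀ : K →ₗ[ℂ] H := R.toLinearMap ∘ₗ (T.adjoint.toFun ∘ₗ ι)
  let A : K →L[ℂ] H := LinearMap.toContinuousLinearMap A₀
  have hA : ∀ y : K, ∀ hy : y ∈ T.adjoint.domain, A y = R (T.adjoint ⟨y, hy⟩) :=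
    fun y hy => rfl
  refine ⟨A, ?_, hA⟩
  apply norm_lt_one_of_forall
  intro y hy0
  rw [hA y (hmem y)]
  exact key_est T hdense B R hBinv₁ hBinv₂ hR hRsq y (hmem y) hy0
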